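/- Min-Entropy-Splitting Lemma (non-smooth case): Let X0, X1 and Z be finite random variables with H_min(X0 X1 | Z) >= α, i.e. sum_z max_{x0,x1} P[X0=x0, X1=x1, Z=z] <= 2^{-α}. Then there exists a {0,1}-valued random variable D (a deterministic function of X0 and Z) such that H_min(X_D | D, Z) >= α/2 - 1, i.e. sum_{d,z} max_x P[X_D = x, D = d, Z = z] <= 2·2^{-α/2}. -/

import Mathlib

open Finset Real

/-- Min-Entropy-Splitting Lemma (non-smooth case).
If `∑ z, max_{x0,x1} P[X0 = x0, X1 = x1, Z = z] ≤ 2^(-α)`, then there is a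
binary random variable `D` that is a deterministic function of `(X0, Z)` such
that `∑ d, ∑ z, max_x P[X_D = x, D = d, Z = z] ≤ 2 * 2^(-α/2)`,
i.e. `H_min(X_D | D, Z) ≥ α/2 - 1`. -/
theorem min_entropy_splitting
    {Ω 𝒳 𝒵 : Type} [Fintype Ω] [Fintype 𝒳] [Fintype 𝒵]
    [DecidableEq 𝒳] [DecidableEq 𝒵] [Nonempty 𝒳]
    (μ : Ω → ℝ) (hμ0 : ∀ ω, 0 ≤ μ ω) (hμ1 : ∑ ω, μ ω = 1)
    (X0 X1 : Ω → 𝒳) (Z : Ω → 𝒵) (α : ℝ)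
    (hα : ∑ z, Finset.univ.sup' Finset.univ_nonempty
        (fun p : 𝒳 × 𝒳 =>
          ∑ ω, if X0 ω = p.1 ∧ X1 ω = p.2 ∧ Z ω = z then μ ω else 0)
      ≤ (2:ℝ) ^ (-α)) :
    ∃ f : 𝒳 → 𝒵 → Fin 2,
      ∑ d : Fin 2, ∑ z, Finset.univ.sup' Finset.univ_nonempty
        (fun x => ∑ ω,
          if (if f (X0 ω) (Z ω) = 0 then X0 ω else X1 ω) = x
              ∧ f (X0 ω) (Z ω) = d ∧ Z ω = z
          then μ ω else 0)
      ≤ 2 * (2:ℝ) ^ (-α/2) := by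
  classical
  set β : ℝ := (2:ℝ) ^ (-α/2) with hβdef
  have hβpos : 0 < β := Real.rpow_pos_of_pos (by norm_num) _
  set γ : ℝ := (2:ℝ) ^ (α/2) with hγdef
  have hγpos : 0 < γ := Real.rpow_pos_of_pos (by norm_num) _
  have hβγ : β * γ = 1 := by
    rw [hβdef, hγdef, ← Real.rpow_add (by norm_num : (0:ℝ) < 2),
      show -α/2 + α/2 = 0 by ring, Real.rpow_zero]
  have hγα : γ * (2:ℝ) ^ (-α) = β := by
    rw [hβdef, hγdef, ← Real.rpow_add (by norm_num : (0:ℝ) < 2)]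
    congr 1; ring
  set Q : 𝒳 → 𝒵 → ℝ := fun a z => ∑ ω, if X0 ω = a ∧ Z ω = z then μ ω else 0 with hQdef
  set pz : 𝒵 → ℝ := fun z => ∑ ω, if Z ω = z then μ ω else 0 with hpzdef
  set J : 𝒳 → 𝒳 → 𝒵 → ℝ :=
    fun a b z => ∑ ω, if X0 ω = a ∧ X1 ω = b ∧ Z ω = z then μ ω else 0 with hJdef
  set m : 𝒵 → ℝ :=
    fun z => Finset.univ.sup' Finset.univ_nonempty (fun p : 𝒳 × 𝒳 => J p.1 p.2 z) with hmdef
  set f : 𝒳 → 𝒵 → Fin 2 := fun a z => if Q a z < β * pz z then 0 else 1 with hfdef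
  have hQ0 : ∀ a z, 0 ≤ Q a z := fun a z =>
    Finset.sum_nonneg fun ω _ => by split <;> [exact hμ0 ω; exact le_rfl]
  have hpz0 : ∀ z, 0 ≤ pz z := fun z =>
    Finset.sum_nonneg fun ω _ => by split <;> [exact hμ0 ω; exact le_rfl]
  have hJ0 : ∀ a b z, 0 ≤ J a b z := fun a b z =>
    Finset.sum_nonneg fun ω _ => by split <;> [exact hμ0 ω; exact le_rfl]
  have hJle : ∀ a b z, J a b z ≤ pz z := by
    intro a b z
    refine Finset.sum_le_sum fun ω _ => ?_
    split_ifs with h1 h2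
    · exact le_rfl
    · exact absurd h1.2.2 h2
    · exact hμ0 ω
    · exact le_rfl
  have hm0 : ∀ z, 0 ≤ m z := by
    intro z
    obtain ⟨x⟩ := (inferInstance : Nonempty 𝒳)
    exact le_trans (hJ0 x x z) (Finset.le_sup' (fun p : 𝒳 × 𝒳 => J p.1 p.2 z) (mem_univ (x, x)))
  have hJm : ∀ a b z, J a b z ≤ m z := fun a b z =>
    Finset.le_sup' (fun p : 𝒳 × 𝒳 => J p.1 p.2 z) (mem_univ (a, b))
  have hQsum : ∀ z, ∑ a, Q a z = pz z := by
    intro z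
    rw [hQdef, hpzdef]
    rw [Finset.sum_comm]
    refine Finset.sum_congr rfl fun ω _ => ?_
    by_cases hz : Z ω = z
    · simp [hz, Finset.sum_ite_eq]
    · simp [hz]
  have hpzsum : ∑ z, pz z = 1 := by
    rw [hpzdef, Finset.sum_comm, ← hμ1]
    refine Finset.sum_congr rfl fun ω _ => ?_
    simp [Finset.sum_ite_eq]
  have hf0 : ∀ a z, f a z = 0 ↔ Q a z < β * pz z := by
    intro a z
    rw [hfdef]
    dsimp only
    split_ifs with h
    · simpa using h
    · simpa using h
  have hf1 : ∀ a z, f a z = 1 ↔ β * pz z ≤ Q a z := by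
    intro a z
    rw [hfdef]
    dsimp only
    split_ifs with h
    · simpa using not_le.mpr h
    · simpa using not_lt.mp h
  -- d = 0 bound
  have hd0 : ∀ z, Finset.univ.sup' Finset.univ_nonempty
      (fun x => ∑ ω,
        if (if f (X0 ω) (Z ω) = 0 then X0 ω else X1 ω) = x
            ∧ f (X0 ω) (Z ω) = 0 ∧ Z ω = z
        then μ ω else 0) ≤ β * pz z := by
    intro z
    refine Finset.sup'_le _ _ fun x _ => ?_
    have key : (∑ ω, if (if f (X0 ω) (Z ω) = 0 then X0 ω else X1 ω) = x
            ∧ f (X0 ω) (Z ω) = 0 ∧ Z ω = z then μ ω else 0)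
        = ∑ ω, if X0 ω = x ∧ Z ω = z ∧ f x z = 0 then μ ω else 0 := by
      refine Finset.sum_congr rfl fun ω _ => ?_
      refine if_congr ?_ rfl rfl
      constructor
      · rintro ⟨h1, h2, h3⟩
        rw [if_pos h2] at h1
        rw [h3] at h2
        rw [h1] at h2
        exact ⟨h1, h3, h2⟩
      · rintro ⟨h1, h2, h3⟩
        have h4 : f (X0 ω) (Z ω) = 0 := by rw [h1, h2]; exact h3
        exact ⟨by rw [if_pos h4]; exact h1, h4, h2⟩
    rw [key]
    by_cases hfx : f x z = 0
    · have : (∑ ω, if X0 ω = x ∧ Z ω = z ∧ f x z = 0 then μ ω else 0) = Q x z := by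
        rw [hQdef]
        refine Finset.sum_congr rfl fun ω _ => ?_
        simp [hfx, and_assoc]
      rw [this]
      exact le_of_lt ((hf0 x z).mp hfx)
    · have : (∑ ω, if X0 ω = x ∧ Z ω = z ∧ f x z = 0 then μ ω else 0) = 0 := by
        refine Finset.sum_eq_zero fun ω _ => ?_
        simp [hfx]
      rw [this]
      exact mul_nonneg hβpos.le (hpz0 z)
  -- d = 1 bound
  have hd1 : ∀ z, Finset.univ.sup' Finset.univ_nonempty
      (fun x => ∑ ω,
        if (if f (X0 ω) (Z ω) = 0 then X0 ω else X1 ω) = x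
            ∧ f (X0 ω) (Z ω) = 1 ∧ Z ω = z
        then μ ω else 0) ≤ γ * m z := by
    intro z
    refine Finset.sup'_le _ _ fun x _ => ?_
    set T : Finset 𝒳 := Finset.univ.filter (fun a => f a z = 1) with hTdef
    have hTmem : ∀ a, a ∈ T ↔ f a z = 1 := by
      intro a; rw [hTdef]; simp
    have key : (∑ ω, if (if f (X0 ω) (Z ω) = 0 then X0 ω else X1 ω) = x
            ∧ f (X0 ω) (Z ω) = 1 ∧ Z ω = z then μ ω else 0)
        = ∑ a ∈ T, J a x z := by
      rw [hJdef, Finset.sum_comm]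
      refine Finset.sum_congr rfl fun ω _ => ?_
      have step : ∀ a ∈ T, (if X0 ω = a ∧ X1 ω = x ∧ Z ω = z then μ ω else 0)
          = if X0 ω = a then (if X1 ω = x ∧ Z ω = z then μ ω else 0) else 0 := by
        intro a _
        rw [ite_and]
      rw [Finset.sum_congr rfl step, Finset.sum_ite_eq T (X0 ω)
        (fun _ => if X1 ω = x ∧ Z ω = z then μ ω else 0)]
      by_cases hz : Z ω = z
      · by_cases hf : f (X0 ω) z = 1
        · have hf' : f (X0 ω) (Z ω) = 1 := by rw [hz]; exact hf
          have hne : ¬ f (X0 ω) (Z ω) = 0 := by rw [hf']; decide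
          have hmem : X0 ω ∈ T := (hTmem _).mpr hf
          simp [hne, hf, hf', hz, hmem]
        · have hf' : ¬ f (X0 ω) (Z ω) = 1 := by rw [hz]; exact hf
          have hmem : X0 ω ∉ T := fun h => hf ((hTmem _).mp h)
          simp [hf', hmem]
      · simp [hz]
    rw [key]
    by_cases hpz : pz z = 0
    · have hJz : ∀ a ∈ T, J a x z = 0 := fun a _ =>
        le_antisymm (by rw [← hpz]; exact hJle a x z) (hJ0 a x z)
      rw [Finset.sum_eq_zero hJz]
      exact mul_nonneg hγpos.le (hm0 z)
    · have hpzpos : 0 < pz z := lt_of_le_of_ne (hpz0 z) (Ne.symm hpz)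
      have hcard : (T.card : ℝ) * (β * pz z) ≤ pz z := by
        calc (T.card : ℝ) * (β * pz z) = ∑ _a ∈ T, β * pz z := by
              rw [Finset.sum_const, nsmul_eq_mul]
          _ ≤ ∑ a ∈ T, Q a z :=
              Finset.sum_le_sum fun a ha => (hf1 a z).mp ((hTmem a).mp ha)
          _ ≤ ∑ a, Q a z :=
              Finset.sum_le_sum_of_subset_of_nonneg (Finset.subset_univ T)
                (fun a _ _ => hQ0 a z)
          _ = pz z := hQsum z
      have hcardγ : (T.card : ℝ) ≤ γ := by
        have h1 : (T.card : ℝ) * β ≤ 1 := by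
          have := (mul_le_mul_iff_of_pos_right hpzpos).mp (by linarith [hcard] : (T.card : ℝ) * β * pz z ≤ 1 * pz z)
          linarith
        have h2 : (T.card : ℝ) * β * γ ≤ 1 * γ :=
          mul_le_mul_of_nonneg_right h1 hγpos.le
        rw [mul_assoc, hβγ] at h2
        linarith
      calc ∑ a ∈ T, J a x z ≤ ∑ _a ∈ T, m z :=
            Finset.sum_le_sum fun a _ => hJm a x z
        _ = (T.card : ℝ) * m z := by rw [Finset.sum_const, nsmul_eq_mul]
        _ ≤ γ * m z := mul_le_mul_of_nonneg_right hcardγ (hm0 z)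
  refine ⟨f, ?_⟩
  rw [Fin.sum_univ_two]
  have hS0 : (∑ z, Finset.univ.sup' Finset.univ_nonempty
      (fun x => ∑ ω,
        if (if f (X0 ω) (Z ω) = 0 then X0 ω else X1 ω) = x
            ∧ f (X0 ω) (Z ω) = 0 ∧ Z ω = z
        then μ ω else 0)) ≤ β := by
    calc _ ≤ ∑ z, β * pz z := Finset.sum_le_sum fun z _ => hd0 z
      _ = β * ∑ z, pz z := by rw [Finset.mul_sum]
      _ = β := by rw [hpzsum, mul_one]
  have hS1 : (∑ z, Finset.univ.sup' Finset.univ_nonempty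
      (fun x => ∑ ω,
        if (if f (X0 ω) (Z ω) = 0 then X0 ω else X1 ω) = x
            ∧ f (X0 ω) (Z ω) = 1 ∧ Z ω = z
        then μ ω else 0)) ≤ β := by
    calc _ ≤ ∑ z, γ * m z := Finset.sum_le_sum fun z _ => hd1 z
      _ = γ * ∑ z, m z := by rw [Finset.mul_sum]
      _ ≤ γ * (2:ℝ) ^ (-α) := mul_le_mul_of_nonneg_left hα hγpos.le
      _ = β := hγα
  linarith
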